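/- Let X ∈ U(n, 2^s) be a balanced two-level lattice design with n ≥ 2, and map each entry to z_{ij} = (2 x_{ij} + 1)/4 ∈ {1/4, 3/4}. Then CL2²(X) − a_1 = (2/n²) ∑_{1 ≤ i < k ≤ n} (5/4)^{β(x_i, x_k)} ≥ ((n−1)(4+f)/(4n)) (5/4)^θ, where a_1 = (1/n)(5/4)^s + (13/12)^s − 2(35/32)^s, β̄ = s(n−2)/(2(n−1)), θ = ⌊β̄⌋ and f = β̄ − θ. -/

import Mathlib

open Finset

/-- The coincidence number β(x, w) = #{j : x_j = w_j} of two lattice points. -/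
def coincidence {s q : ℕ} (x w : Fin s → Fin q) : ℕ :=
  (univ.filter fun j => x j = w j).card

/-- A design `X ∈ U(n, q^s)` is balanced: `q ∣ n` and every level occurs exactly
`n / q` times in each column; here `q = 2`. -/
def IsBalanced {n s q : ℕ} (X : Fin n → Fin s → Fin q) : Prop :=
  q ∣ n ∧ ∀ (j : Fin s) (ℓ : Fin q),
    (univ.filter fun i => X i j = ℓ).card = n / q

/-- The index set of pairs 1 ≤ i < k ≤ n. -/
def pairs (n : ℕ) : Finset (Fin n × Fin n) := univ.filter fun p => p.1 < p.2

/-- The design points mapped to [0,1]: z_{ij} = (2 x_{ij} + 1)/4 ∈ {1/4, 3/4}. -/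
noncomputable def zpt2 {n s : ℕ} (X : Fin n → Fin s → Fin 2) (i : Fin n) (j : Fin s) : ℝ :=
  (2 * ((X i j : ℕ) : ℝ) + 1) / 4

/-- The squared centered L₂-discrepancy of the induced point set. -/
noncomputable def CL2sq {n s : ℕ} (X : Fin n → Fin s → Fin 2) : ℝ :=
  (13 / 12 : ℝ) ^ s
    - 2 / (n : ℝ) * ∑ i, ∏ j,
        (1 + |zpt2 X i j - 1 / 2| / 2 - |zpt2 X i j - 1 / 2| ^ 2 / 2)
    + 1 / (n : ℝ) ^ 2 * ∑ i, ∑ k, ∏ j,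
        (1 + |zpt2 X i j - 1 / 2| / 2 + |zpt2 X k j - 1 / 2| / 2
          - |zpt2 X i j - zpt2 X k j| / 2)

lemma sum_sum_eq {n : ℕ} (F : Fin n → Fin n → ℝ) (hsym : ∀ i k, F i k = F k i) :
    ∑ i, ∑ k, F i k = (∑ i, F i i) + 2 * ∑ p ∈ pairs n, F p.1 p.2 := by
  classical
  have h1 : ∑ i, ∑ k, F i k = ∑ p : Fin n × Fin n, F p.1 p.2 := by
    rw [Fintype.sum_prod_type]
  have hsplit := Finset.sum_filter_add_sum_filter_not (univ : Finset (Fin n × Fin n))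
    (fun p => p.1 < p.2) (fun p => F p.1 p.2)
  have hsplit2 := Finset.sum_filter_add_sum_filter_not
    ((univ : Finset (Fin n × Fin n)).filter (fun p => ¬ p.1 < p.2))
    (fun p => p.1 = p.2) (fun p => F p.1 p.2)
  have e1 : ((univ : Finset (Fin n × Fin n)).filter (fun p => ¬ p.1 < p.2)).filter
      (fun p => p.1 = p.2) = univ.filter (fun p => p.1 = p.2) := by
    ext p; simp only [mem_filter, mem_univ, true_and, Finset.filter_filter]
    constructor
    · rintro ⟨-, h⟩; exact h
    · intro h; exact ⟨by simp [h], h⟩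
  have e2 : ((univ : Finset (Fin n × Fin n)).filter (fun p => ¬ p.1 < p.2)).filter
      (fun p => ¬ p.1 = p.2) = univ.filter (fun p => p.2 < p.1) := by
    ext p; simp only [mem_filter, mem_univ, true_and, Fin.lt_def, Fin.ext_iff]
    omega
  have ediag : (univ : Finset (Fin n × Fin n)).filter (fun p => p.1 = p.2)
      = univ.image (fun i : Fin n => (i, i)) := by
    ext p
    simp only [mem_filter, mem_univ, true_and, mem_image]
    constructor
    · intro h; exact ⟨p.1, Prod.ext rfl h⟩
    · rintro ⟨i, rfl⟩; rfl
  have hdiag : ∑ p ∈ (univ : Finset (Fin n × Fin n)).filter (fun p => p.1 = p.2),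
      F p.1 p.2 = ∑ i, F i i := by
    rw [ediag, Finset.sum_image (by intro a _ b _ h; exact (Prod.mk.injEq _ _ _ _ ▸ h).1)]
  have eswap : (univ : Finset (Fin n × Fin n)).filter (fun p => p.2 < p.1)
      = (pairs n).image Prod.swap := by
    ext p
    simp only [mem_filter, mem_univ, true_and, mem_image, pairs]
    constructor
    · intro h; exact ⟨p.swap, by simpa using h, by simp⟩
    · rintro ⟨q, hq, rfl⟩; simpa using hq
  have hswap : ∑ p ∈ (univ : Finset (Fin n × Fin n)).filter (fun p => p.2 < p.1),
      F p.1 p.2 = ∑ p ∈ pairs n, F p.1 p.2 := by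
    rw [eswap, Finset.sum_image (fun a _ b _ h => Prod.swap_injective h)]
    exact Finset.sum_congr rfl fun p _ => by simp [hsym p.2 p.1]
  rw [h1, ← hsplit, ← hsplit2, e1, e2, hdiag, hswap, pairs]
  ring

lemma pow_lb (θ m : ℕ) : (5/4:ℝ)^θ * (1 + ((m:ℝ) - θ)/4) ≤ (5/4:ℝ)^m := by
  rcases le_or_gt θ m with h | h
  · obtain ⟨d, rfl⟩ := Nat.exists_eq_add_of_le h
    have hb : (1:ℝ) + d * (1/4) ≤ (1 + 1/4)^d := one_add_mul_le_pow (by norm_num) d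
    rw [pow_add]
    have : (1 : ℝ) + ((↑(θ + d):ℝ) - θ)/4 = 1 + d * (1/4) := by push_cast; ring
    rw [this]
    have h5 : (0:ℝ) < (5/4:ℝ)^θ := by positivity
    calc (5/4:ℝ)^θ * (1 + d*(1/4)) ≤ (5/4:ℝ)^θ * (1+1/4)^d := by
          exact mul_le_mul_of_nonneg_left hb (le_of_lt h5)
      _ = (5/4:ℝ)^θ * (5/4)^d := by norm_num
  · obtain ⟨d, rfl⟩ := Nat.exists_eq_add_of_le h.le
    have hb : (1:ℝ) + d * (-(1/5)) ≤ (1 + -(1/5))^d := one_add_mul_le_pow (by norm_num) d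
    have h5 : (0:ℝ) < (5/4:ℝ)^m := by positivity
    have h5d : (0:ℝ) < (5/4:ℝ)^d := by positivity
    have key : (5/4:ℝ)^d * (1 - (d:ℝ)/4) ≤ 1 := by
      have h1 : (1:ℝ) - (d:ℝ)/4 ≤ (4/5:ℝ)^d := by
        calc (1:ℝ) - (d:ℝ)/4 ≤ 1 + d * (-(1/5)) := by nlinarith [Nat.cast_nonneg (α := ℝ) d]
          _ ≤ (1 + -(1/5))^d := hb
          _ = (4/5:ℝ)^d := by norm_num
      calc (5/4:ℝ)^d * (1 - (d:ℝ)/4) ≤ (5/4:ℝ)^d * (4/5)^d :=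
            mul_le_mul_of_nonneg_left h1 (le_of_lt h5d)
        _ = ((5/4:ℝ) * (4/5))^d := by rw [mul_pow]
        _ = 1 := by norm_num
    have : (1:ℝ) + ((m:ℝ) - ↑(m + d))/4 = 1 - (d:ℝ)/4 := by push_cast; ring
    rw [pow_add, this]
    nlinarith

lemma coincidence_comm {s q : ℕ} (x w : Fin s → Fin q) :
    coincidence x w = coincidence w x := by
  simp only [coincidence]; congr 1; ext j; simp [eq_comm]

lemma coincidence_self {s q : ℕ} (x : Fin s → Fin q) : coincidence x x = s := by
  simp [coincidence]

lemma coef_eq (n s θ : ℕ) (N f βbar : ℝ) (hn0 : (n:ℝ) ≠ 0) (hn1 : (n:ℝ) - 1 ≠ 0)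
    (hβbar : βbar = (s : ℝ) * ((n : ℝ) - 2) / (2 * ((n : ℝ) - 1)))
    (hf : f = βbar - θ) (hN : N = ((n:ℝ)^2 - n)/2) :
    2/(n:ℝ)^2 * (N * (1 - (θ:ℝ)/4) + ((s:ℝ)*n*((n:ℝ)-2)/4)/4) = ((n:ℝ)-1)*(4+f)/(4*n) := by
  rw [hN, hf, hβbar]
  field_simp
  ring

/-- Corollary 1 (two-level, centered L₂-discrepancy):
CL₂²(X) − a₁ = (2/n²) ∑_{i<k} (5/4)^{β(x_i,x_k)} ≥ ((n−1)(4+f)/(4n)) (5/4)^θ. -/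
theorem CL2sq_identity_and_bound (n s : ℕ) (hn : 2 ≤ n)
    (X : Fin n → Fin s → Fin 2) (hX : IsBalanced X)
    (a₁ : ℝ) (ha₁ : a₁ = 1 / (n : ℝ) * (5 / 4) ^ s + (13 / 12 : ℝ) ^ s
      - 2 * (35 / 32 : ℝ) ^ s)
    (βbar : ℝ) (hβbar : βbar = (s : ℝ) * ((n : ℝ) - 2) / (2 * ((n : ℝ) - 1)))
    (θ : ℕ) (hθ : θ = ⌊βbar⌋₊)
    (f : ℝ) (hf : f = βbar - θ) :
    CL2sq X - a₁ = 2 / (n : ℝ) ^ 2 *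
        ∑ p ∈ pairs n, (5 / 4 : ℝ) ^ coincidence (X p.1) (X p.2) ∧
      2 / (n : ℝ) ^ 2 * ∑ p ∈ pairs n, (5 / 4 : ℝ) ^ coincidence (X p.1) (X p.2)
        ≥ ((n : ℝ) - 1) * (4 + f) / (4 * n) * (5 / 4 : ℝ) ^ θ := by
  classical
  have hnR : (2:ℝ) ≤ (n:ℝ) := by exact_mod_cast hn
  have hn0 : (n : ℝ) ≠ 0 := by intro h; rw [h] at hnR; linarith
  have hn1 : (n : ℝ) - 1 ≠ 0 := by intro h; nlinarith
  obtain ⟨m, hm⟩ := hX.1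
  have hndiv : n / 2 = m := by omega
  have hmr : (n : ℝ) = 2 * m := by rw [hm]; push_cast; ring
  set Sp : ℝ := ∑ p ∈ pairs n, (5 / 4 : ℝ) ^ coincidence (X p.1) (X p.2) with hSp
  clear_value Sp
  have hval : ∀ (i : Fin n) (j : Fin s), ((X i j : ℕ)) = 0 ∨ ((X i j : ℕ)) = 1 :=
    fun i j => by have := (X i j).isLt; omega
  have hBfac : ∀ (i k : Fin n) (j : Fin s),
      (1 + |zpt2 X i j - 1/2|/2 + |zpt2 X k j - 1/2|/2 - |zpt2 X i j - zpt2 X k j|/2)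
        = if X i j = X k j then (5/4:ℝ) else 1 := by
    intro i k j
    have heq : (X i j = X k j) ↔ ((X i j : ℕ) = (X k j : ℕ)) := (Fin.val_eq_val _ _).symm
    rcases hval i j with h1 | h1 <;> rcases hval k j with h2 | h2 <;>
      simp [zpt2, h1, h2, heq] <;> norm_num [abs_of_nonneg, abs_of_nonpos]
  have hBprod : ∀ i k : Fin n,
      ∏ j, (1 + |zpt2 X i j - 1/2|/2 + |zpt2 X k j - 1/2|/2 - |zpt2 X i j - zpt2 X k j|/2)
        = (5/4:ℝ) ^ coincidence (X i) (X k) := by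
    intro i k
    rw [Finset.prod_congr rfl fun j _ => hBfac i k j, Finset.prod_ite, Finset.prod_const,
      Finset.prod_const, one_pow, mul_one, coincidence]
  have hAfac : ∀ (i : Fin n) (j : Fin s),
      (1 + |zpt2 X i j - 1/2|/2 - |zpt2 X i j - 1/2|^2/2) = (35/32:ℝ) := by
    intro i j
    rcases hval i j with h1 | h1 <;> simp [zpt2, h1] <;> norm_num [abs_of_nonneg, abs_of_nonpos]
  have hdouble := sum_sum_eq (fun i k => (5/4:ℝ) ^ coincidence (X i) (X k))
    (fun i k => by rw [coincidence_comm])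
  have hdiagsum : (∑ i : Fin n, (5/4:ℝ) ^ coincidence (X i) (X i)) = n * (5/4:ℝ)^s := by
    simp [coincidence_self, Finset.sum_const, Finset.card_univ, nsmul_eq_mul]
  have hA : (∑ i : Fin n, ∏ j, (1 + |zpt2 X i j - 1 / 2| / 2 - |zpt2 X i j - 1 / 2| ^ 2 / 2))
      = n * (35/32:ℝ)^s := by
    have h1 : ∀ i : Fin n, (∏ j, (1 + |zpt2 X i j - 1 / 2| / 2 - |zpt2 X i j - 1 / 2| ^ 2 / 2))
        = (35/32:ℝ)^s := by
      intro i
      rw [Finset.prod_congr rfl fun j _ => hAfac i j, Finset.prod_const, Finset.card_univ,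
        Fintype.card_fin]
    rw [Finset.sum_congr rfl fun i _ => h1 i]
    simp [Finset.sum_const, Finset.card_univ, nsmul_eq_mul]
  have hBsum : (∑ i : Fin n, ∑ k : Fin n, ∏ j,
      (1 + |zpt2 X i j - 1 / 2| / 2 + |zpt2 X k j - 1 / 2| / 2
        - |zpt2 X i j - zpt2 X k j| / 2)) = n * (5/4:ℝ)^s + 2 * Sp := by
    calc (∑ i : Fin n, ∑ k : Fin n, ∏ j,
        (1 + |zpt2 X i j - 1 / 2| / 2 + |zpt2 X k j - 1 / 2| / 2
          - |zpt2 X i j - zpt2 X k j| / 2))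
        = ∑ i, ∑ k, (5/4:ℝ)^coincidence (X i) (X k) :=
          Finset.sum_congr rfl fun i _ => Finset.sum_congr rfl fun k _ => hBprod i k
      _ = n * (5/4:ℝ)^s + 2 * Sp := by rw [hdouble, hdiagsum, hSp]
  have hid : CL2sq X - a₁ = 2 / (n:ℝ)^2 * Sp := by
    rw [CL2sq, hA, hBsum, ha₁]
    field_simp
    ring
  refine ⟨hid, ?_⟩
  have hcard : 2 * (((pairs n).card : ℕ) : ℝ) = (n:ℝ)^2 - n := by
    have h1 := sum_sum_eq (n := n) (fun _ _ => (1:ℝ)) (fun _ _ => rfl)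
    simp only [Finset.sum_const, Finset.card_univ, Fintype.card_fin, nsmul_eq_mul,
      mul_one] at h1
    nlinarith [h1]
  have hbeta : (∑ p ∈ pairs n, ((coincidence (X p.1) (X p.2) : ℕ) : ℝ))
      = (s:ℝ) * n * ((n:ℝ) - 2) / 4 := by
    have hcol : ∀ j : Fin s, (∑ p ∈ pairs n, (if X p.1 j = X p.2 j then (1:ℝ) else 0))
        = ((n:ℝ) * m - n)/2 := by
      intro j
      have hs2 := sum_sum_eq (fun i k => if X i j = X k j then (1:ℝ) else 0)
        (fun i k => by simp [eq_comm])
      have hinner : ∀ i : Fin n, (∑ k, if X i j = X k j then (1:ℝ) else 0) = (m:ℝ) := by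
        intro i
        rw [Finset.sum_boole]
        have hfe : (Finset.univ.filter fun k => X i j = X k j)
            = (Finset.univ.filter fun k => X k j = X i j) := by
          ext k; simp [eq_comm]
        rw [hfe, hX.2 j (X i j), hndiv]
      rw [Finset.sum_congr rfl fun i _ => hinner i] at hs2
      simp only [Finset.sum_const, Finset.card_univ, Fintype.card_fin, nsmul_eq_mul,
        eq_self_iff_true, if_true] at hs2
      linarith
    have hm2 : (m:ℝ) = (n:ℝ)/2 := by rw [hmr]; ring
    calc (∑ p ∈ pairs n, ((coincidence (X p.1) (X p.2) : ℕ) : ℝ))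
        = ∑ p ∈ pairs n, ∑ j, (if X p.1 j = X p.2 j then (1:ℝ) else 0) := by
          refine Finset.sum_congr rfl fun p _ => ?_
          rw [coincidence, Finset.sum_boole]
      _ = ∑ j, ∑ p ∈ pairs n, (if X p.1 j = X p.2 j then (1:ℝ) else 0) := Finset.sum_comm
      _ = ∑ _j : Fin s, ((n:ℝ) * m - n)/2 := Finset.sum_congr rfl fun j _ => hcol j
      _ = (s:ℝ) * (((n:ℝ)*m - n)/2) := by
          simp [Finset.sum_const, Finset.card_univ, nsmul_eq_mul]
      _ = (s:ℝ) * n * ((n:ℝ) - 2)/4 := by rw [hm2]; field_simp; ring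
  have hstep : ∑ p ∈ pairs n, (5/4:ℝ)^θ * (1 + ((coincidence (X p.1) (X p.2) : ℝ) - θ)/4)
      ≤ Sp := by rw [hSp]; exact Finset.sum_le_sum fun p _ => pow_lb θ _
  have hexp : ∑ p ∈ pairs n, (5/4:ℝ)^θ * (1 + ((coincidence (X p.1) (X p.2) : ℝ) - θ)/4)
      = (5/4:ℝ)^θ * ((((pairs n).card : ℝ)) * (1 - (θ:ℝ)/4)
        + ((s:ℝ) * n * ((n:ℝ)-2)/4)/4) := by
    rw [← Finset.mul_sum]
    congr 1
    have hterm : ∀ p ∈ pairs n, (1 + ((coincidence (X p.1) (X p.2) : ℝ) - θ)/4)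
        = (1 - (θ:ℝ)/4) + (coincidence (X p.1) (X p.2) : ℝ)/4 := fun p _ => by ring
    rw [Finset.sum_congr rfl hterm, Finset.sum_add_distrib, Finset.sum_const,
      ← Finset.sum_div, hbeta, nsmul_eq_mul]
  have hcoef : 2/(n:ℝ)^2 * ((((pairs n).card : ℝ)) * (1 - (θ:ℝ)/4)
      + ((s:ℝ)*n*((n:ℝ)-2)/4)/4) = ((n:ℝ)-1)*(4+f)/(4*n) := by
    exact coef_eq n s θ _ f βbar hn0 hn1 hβbar hf (by linarith)
  have hrw : ((n:ℝ)-1)*(4+f)/(4*n) * (5/4:ℝ)^θ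
      = 2/(n:ℝ)^2 * ((5/4:ℝ)^θ * ((((pairs n).card : ℝ)) * (1 - (θ:ℝ)/4)
        + ((s:ℝ)*n*((n:ℝ)-2)/4)/4)) := by
    rw [← hcoef]; ring
  rw [ge_iff_le, hrw]
  apply mul_le_mul_of_nonneg_left _ (by positivity : (0:ℝ) ≤ 2/(n:ℝ)^2)
  rw [← hexp]
  exact hstep
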